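/- Let a = r/s ∈ ℚ with gcd(r,s) = 1, s > 0, c = -1 + a - a², f(x) = x² + c. Then for all n ≥ 0, the denominator of f^n(0) - a in lowest terms is s^(2^n), and the numerators satisfy r_0 = -r and r_{n+1} = r_n² + 2 r_n r s^(2^n - 1) - s^(2^(n+1)). -/

import Mathlib

private def P (r s : ℤ) : ℕ → ℤ
  | 0 => -r
  | n + 1 => P r s n ^ 2 + 2 * P r s n * r * s ^ (2 ^ n - 1) - s ^ (2 ^ (n + 1))

private lemma P_coprime (r s : ℤ) (hco : IsCoprime r s) : ∀ n, IsCoprime (P r s n) s := by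
  intro n
  induction n with
  | zero => simpa [P] using hco.neg_left
  | succ n ih =>
    have h2 : (1:ℕ) ≤ 2 ^ n := Nat.one_le_two_pow
    have h3 : (1:ℕ) ≤ 2 ^ (n+1) := Nat.one_le_two_pow
    have key : P r s (n+1) = P r s n * (P r s n + 2 * r * s ^ (2 ^ n - 1))
        + s * (-(s ^ (2 ^ (n+1) - 1))) := by
      have : s * s ^ (2 ^ (n+1) - 1) = s ^ (2 ^ (n+1)) := by
        rw [← pow_succ']
        congr 1
        omega
      simp only [P]
      rw [← this]; ring
    rw [key]
    apply IsCoprime.add_mul_left_left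
    apply ih.mul_left
    rcases Nat.eq_zero_or_pos n with hn | hn
    · subst hn
      have h5 : P r s 0 + 2 * r * s ^ (2 ^ 0 - 1) = r := by simp [P]; ring
      rw [h5]; exact hco
    · have h4 : (1:ℕ) ≤ 2 ^ n - 1 := by
        have : (2:ℕ) ≤ 2 ^ n := by
          calc (2:ℕ) = 2 ^ 1 := rfl
          _ ≤ 2 ^ n := Nat.pow_le_pow_right (by norm_num) hn
        omega
      have : P r s n + 2 * r * s ^ (2 ^ n - 1)
          = P r s n + s * (2 * r * s ^ (2 ^ n - 1 - 1)) := by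
        have : s * s ^ (2 ^ n - 1 - 1) = s ^ (2 ^ n - 1) := by
          rw [← pow_succ']
          congr 1
          omega
        rw [← this]; ring
      rw [this]
      exact ih.add_mul_left_left _

theorem stmt17 (r s : ℤ) (hco : Int.gcd r s = 1) (hs : 0 < s)
    (a : ℚ) (ha : a = (r : ℚ) / (s : ℚ)) (c : ℚ) (hc : c = -1 + a - a^2)
    (f : ℚ → ℚ) (hf : ∀ x, f x = x^2 + c) :
    (∀ n : ℕ, ((f^[n] 0 - a).den : ℤ) = s ^ (2 ^ n)) ∧
    (f^[0] 0 - a).num = -r ∧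
    ∀ n : ℕ, (f^[n+1] 0 - a).num =
      (f^[n] 0 - a).num ^ 2 + 2 * (f^[n] 0 - a).num * r * s ^ (2 ^ n - 1)
        - s ^ (2 ^ (n + 1)) := by
  have hcop : IsCoprime r s := Int.isCoprime_iff_gcd_eq_one.mpr hco
  have hsQ : ((s:ℚ)) ≠ 0 := by positivity
  -- value lemma
  have hval : ∀ n : ℕ, f^[n] 0 - a = (P r s n : ℚ) / (s:ℚ) ^ (2 ^ n) := by
    intro n
    induction n with
    | zero => simp [P, ha, neg_div]
    | succ n ih =>
      obtain ⟨k, hk⟩ : ∃ k, 2 ^ n = k + 1 :=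
        ⟨2 ^ n - 1, by have := Nat.one_le_two_pow (n := n); omega⟩
      have hk2 : 2 ^ (n + 1) = 2 * (k + 1) := by rw [pow_succ]; omega
      have hstep : f^[n+1] 0 - a = (f^[n] 0 - a)^2 + 2*a*(f^[n] 0 - a) - 1 := by
        rw [Function.iterate_succ_apply', hf, hc]
        ring
      rw [hstep, ih]
      have hk1 : 2 ^ n - 1 = k := by omega
      simp only [P]
      rw [hk1, hk, hk2, ha]
      push_cast
      field_simp
      ring
  have hden : ∀ n : ℕ, ((f^[n] 0 - a).den : ℤ) = s ^ (2 ^ n) := by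
    intro n
    rw [hval n, ← Int.cast_pow]
    exact Rat.den_div_eq_of_coprime (by positivity)
      (Int.isCoprime_iff_gcd_eq_one.mp ((P_coprime r s hcop n).pow_right))
  have hnum : ∀ n : ℕ, (f^[n] 0 - a).num = P r s n := by
    intro n
    rw [hval n, ← Int.cast_pow]
    exact Rat.num_div_eq_of_coprime (by positivity)
      (Int.isCoprime_iff_gcd_eq_one.mp ((P_coprime r s hcop n).pow_right))
  refine ⟨hden, by rw [hnum 0]; rfl, fun n => ?_⟩
  rw [hnum (n+1), hnum n]
  rfl
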